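/- For every complex number q with |q| < 1, the Eisenstein series P(q) = 1 − 24·∑_{n=1}^∞ n qⁿ/(1 − qⁿ) satisfies P(q) = 3·𝒫(q) − 2·e(q). -/

import Mathlib

open Complex

/-- The normalized Eisenstein series `𝒫(q) = 1 + 8 ∑_{n≥1} (-1)^{n-1} n qⁿ/(1-qⁿ)`. -/
noncomputable def mP (q : ℂ) : ℂ :=
  1 + 8 * ∑' n : ℕ, (-1) ^ n * ((n : ℂ) + 1) * q ^ (n + 1) / (1 - q ^ (n + 1))

/-- The normalized Eisenstein series `e(q) = 1 + 24 ∑_{n≥1} n qⁿ/(1+qⁿ)`. -/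
noncomputable def ee (q : ℂ) : ℂ :=
  1 + 24 * ∑' n : ℕ, ((n : ℂ) + 1) * q ^ (n + 1) / (1 + q ^ (n + 1))

/-- The normalized Eisenstein series `𝒬(q) = 1 - 16 ∑_{n≥1} (-1)^{n-1} n³ qⁿ/(1-qⁿ)`. -/
noncomputable def mQ (q : ℂ) : ℂ :=
  1 - 16 * ∑' n : ℕ, (-1) ^ n * ((n : ℂ) + 1) ^ 3 * q ^ (n + 1) / (1 - q ^ (n + 1))

/-- Ramanujan's Eisenstein series `P(q) = 1 - 24 ∑_{n≥1} n qⁿ/(1-qⁿ)`. -/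
noncomputable def ramP (q : ℂ) : ℂ :=
  1 - 24 * ∑' n : ℕ, ((n : ℂ) + 1) * q ^ (n + 1) / (1 - q ^ (n + 1))


lemma key_summable {q : ℂ} (hq : ‖q‖ < 1) (d : ℕ → ℂ) (hd : ∀ n, 1 - ‖q‖ ≤ ‖d n‖) :
    Summable fun n : ℕ => ((n : ℂ) + 1) * q ^ (n + 1) / d n := by
  have h0 : (0:ℝ) < 1 - ‖q‖ := by linarith
  have hqn : |‖q‖| < 1 := by rwa [_root_.abs_of_nonneg (norm_nonneg q)]
  have h1 : Summable fun n : ℕ => ((n:ℝ) + 1) * ‖q‖ ^ (n + 1) := by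
    have ha := (summable_pow_mul_geometric_of_norm_lt_one (R := ℝ) 1 hqn).mul_left ‖q‖
    have hb := (summable_geometric_of_lt_one (norm_nonneg q) hq).mul_left ‖q‖
    apply (ha.add hb).congr
    intro n
    simp only [pow_one, pow_succ]
    ring
  refine Summable.of_norm_bounded (g := fun n => ((n:ℝ) + 1) * ‖q‖ ^ (n + 1) / (1 - ‖q‖))
    (h1.div_const _) ?_
  intro n
  rw [norm_div, norm_mul, norm_pow]
  have hn : ‖((n:ℂ)+1)‖ = (n:ℝ) + 1 := by norm_cast
  rw [hn]
  exact div_le_div_of_nonneg_left (by positivity) h0 (hd n)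

lemma hxlt {q : ℂ} (hq : ‖q‖ < 1) (n : ℕ) : ‖q ^ (n+1)‖ < 1 := by
  rw [norm_pow]
  calc ‖q‖^(n+1) ≤ ‖q‖^1 := pow_le_pow_of_le_one (norm_nonneg q) hq.le (by omega)
  _ < 1 := by simpa using hq

lemma h1m {q : ℂ} (hq : ‖q‖ < 1) (n : ℕ) : (1 : ℂ) - q ^ (n+1) ≠ 0 := by
  intro h
  have h2 : q^(n+1) = 1 := by linear_combination -h
  have := hxlt hq n
  rw [h2] at this
  simp at this

lemma h1p {q : ℂ} (hq : ‖q‖ < 1) (n : ℕ) : (1 : ℂ) + q ^ (n+1) ≠ 0 := by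
  intro h
  have h2 : q^(n+1) = -1 := by linear_combination h
  have := hxlt hq n
  rw [h2] at this
  simp at this

lemma hd1m {q : ℂ} (hq : ‖q‖ < 1) : ∀ n : ℕ, 1 - ‖q‖ ≤ ‖(1:ℂ) - q ^ (n+1)‖ := by
  intro n
  have hx := (hxlt hq n).le
  have h2 : ‖q‖^(n+1) ≤ ‖q‖ := by
    have := pow_le_pow_of_le_one (norm_nonneg q) hq.le (show 1 ≤ n+1 by omega)
    simpa using this
  have h3 := norm_sub_norm_le (1:ℂ) (q^(n+1))
  rw [norm_pow] at *
  simp only [norm_one] at h3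
  linarith

lemma hd1p {q : ℂ} (hq : ‖q‖ < 1) : ∀ n : ℕ, 1 - ‖q‖ ≤ ‖(1:ℂ) + q ^ (n+1)‖ := by
  intro n
  have h2 : ‖q‖^(n+1) ≤ ‖q‖ := by
    have := pow_le_pow_of_le_one (norm_nonneg q) hq.le (show 1 ≤ n+1 by omega)
    simpa using this
  have h3 := norm_sub_norm_le (1:ℂ) (-(q^(n+1)))
  simp only [norm_neg, sub_neg_eq_add, norm_one] at h3
  rw [norm_pow] at *
  linarith

lemma sumF {q : ℂ} (hq : ‖q‖ < 1) :
    Summable fun n : ℕ => ((n : ℂ) + 1) * q ^ (n + 1) / (1 - q ^ (n + 1)) :=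
  key_summable hq _ (hd1m hq)

lemma sumU {q : ℂ} (hq : ‖q‖ < 1) :
    Summable fun n : ℕ => ((n : ℂ) + 1) * q ^ (n + 1) / (1 + q ^ (n + 1)) :=
  key_summable hq _ (hd1p hq)

lemma hq2 {q : ℂ} (hq : ‖q‖ < 1) : ‖q^2‖ < 1 := by
  rw [norm_pow]
  calc ‖q‖^2 ≤ ‖q‖^1 := pow_le_pow_of_le_one (norm_nonneg q) hq.le (by omega)
  _ < 1 := by simpa using hq

lemma sumG {q : ℂ} (hq : ‖q‖ < 1) :
    Summable fun n : ℕ => ((n : ℂ) + 1) * (q^2) ^ (n + 1) / (1 - (q^2) ^ (n + 1)) :=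
  key_summable (hq2 hq) _ (hd1m (hq2 hq))

lemma sumT {q : ℂ} (hq : ‖q‖ < 1) :
    Summable fun n : ℕ => (-1:ℂ) ^ n * ((n : ℂ) + 1) * q ^ (n + 1) / (1 - q ^ (n + 1)) := by
  have hF := sumF hq
  rw [← summable_norm_iff] at hF ⊢
  apply hF.congr
  intro n
  simp [norm_div, norm_mul]

lemma FU_eq {q : ℂ} (hq : ‖q‖ < 1) :
    (∑' n : ℕ, ((n : ℂ) + 1) * q ^ (n + 1) / (1 - q ^ (n + 1)))
    - (∑' n : ℕ, ((n : ℂ) + 1) * q ^ (n + 1) / (1 + q ^ (n + 1)))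
    = 2 * ∑' n : ℕ, ((n : ℂ) + 1) * (q^2) ^ (n + 1) / (1 - (q^2) ^ (n + 1)) := by
  rw [← Summable.tsum_sub (sumF hq) (sumU hq), ← tsum_mul_left]
  apply tsum_congr
  intro n
  have e1 : (q^2)^(n+1) = q^(n+1) * q^(n+1) := by ring
  have hm := h1m hq n
  have hp := h1p hq n
  have hmp : (1:ℂ) - q^(n+1) * q^(n+1) ≠ 0 := by
    intro h
    have hz : ((1:ℂ) - q^(n+1)) * ((1:ℂ) + q^(n+1)) = 0 := by linear_combination h
    rcases mul_eq_zero.mp hz with h' | h'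
    · exact hm h'
    · exact hp h'
  rw [e1]
  rw [div_sub_div _ _ hm hp, mul_div_assoc', div_eq_div_iff (mul_ne_zero hm hp) hmp]
  ring

lemma FT_eq {q : ℂ} (hq : ‖q‖ < 1) :
    (∑' n : ℕ, ((n : ℂ) + 1) * q ^ (n + 1) / (1 - q ^ (n + 1)))
    - (∑' n : ℕ, (-1:ℂ) ^ n * ((n : ℂ) + 1) * q ^ (n + 1) / (1 - q ^ (n + 1)))
    = 4 * ∑' n : ℕ, ((n : ℂ) + 1) * (q^2) ^ (n + 1) / (1 - (q^2) ^ (n + 1)) := by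
  rw [← Summable.tsum_sub (sumF hq) (sumT hq), ← tsum_mul_left]
  set h : ℕ → ℂ := fun n => ((n : ℂ) + 1) * q ^ (n + 1) / (1 - q ^ (n + 1))
    - (-1:ℂ) ^ n * ((n : ℂ) + 1) * q ^ (n + 1) / (1 - q ^ (n + 1)) with hh
  have hinj : Function.Injective (fun k : ℕ => 2 * k + 1) := by
    intro a b hab
    simp only at hab
    omega
  have hsupp : Function.support h ⊆ Set.range (fun k : ℕ => 2 * k + 1) := by
    intro n hn
    rcases Nat.even_or_odd n with he | ho
    · exfalso
      apply hn
      simp only [hh]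
      rw [he.neg_one_pow]
      ring
    · obtain ⟨k, hk⟩ := ho
      exact ⟨k, by simp only; omega⟩
  rw [← hinj.tsum_eq hsupp]
  apply tsum_congr
  intro k
  simp only [hh]
  have hpow : (-1:ℂ) ^ (2 * k + 1) = -1 := by
    rw [pow_succ, pow_mul]
    norm_num
  have hc : ((2 * k + 1 : ℕ) : ℂ) + 1 = 2 * ((k:ℂ) + 1) := by push_cast; ring
  have hqe : q ^ (2 * k + 1 + 1) = (q^2) ^ (k + 1) := by
    rw [← pow_mul]; ring_nf
  rw [hpow, hc, hqe]
  ring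

/-- For `|q| < 1`, one has `P(q) = 3·𝒫(q) − 2·e(q)`. -/
theorem ramP_eq (q : ℂ) (hq : ‖q‖ < 1) :
    ramP q = 3 * mP q - 2 * ee q := by
  rw [ramP, mP, ee]
  linear_combination 24 * (FT_eq hq) - 48 * (FU_eq hq)
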